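/- Let r ≥ 1 and let F₁, …, F_r : ℂ → ℂˣ satisfy F_j(s) = F_{j−1}(s)·F_j(s+1) for all s ∈ ℂ and 2 ≤ j ≤ r, and F₁(s+1) = −F₁(s) for all s ∈ ℂ. Let g ∈ ℤ[x,x⁻¹] and set f(x) = (1 − x⁻¹)^r · g(x). Then for all s ∈ ℂ, (T_f F_r)(s) = (−1)^{g(1)}, where g(1) ∈ ℤ is the sum of the coefficients of g. In particular (T_f F_r)(s) ∈ {1, −1} is constant. -/

import Mathlib

open LaurentPolynomial
open scoped LaurentPolynomial

/-- The coefficient of `x^k` in a Laurent polynomial `f = ∑ₖ a(k) xᵏ ∈ ℤ[x,x⁻¹]`. -/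
noncomputable def coeffZ (f : ℤ[T;T⁻¹]) (k : ℤ) : ℤ := f.coeff k

/-- The twisted function `(T_f F)(s) = ∏ₖ F(s−k)^{a(k)}` where `a` is the coefficient function
of the Laurent polynomial `f`. -/
noncomputable def Tw (f : ℤ[T;T⁻¹]) (F : ℂ → ℂˣ) (s : ℂ) : ℂˣ :=
  ∏ᶠ k : ℤ, F (s - (k : ℂ)) ^ coeffZ f k

/-- The value `g(1) = ∑ₖ a(k)` of a Laurent polynomial `g = ∑ₖ a(k) xᵏ` at `x = 1`,
i.e. the sum of its coefficients. -/
noncomputable def evalOne (g : ℤ[T;T⁻¹]) : ℤ := ∑ᶠ k : ℤ, coeffZ g k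

lemma Tw_support (f : ℤ[T;T⁻¹]) (F : ℂ → ℂˣ) (s : ℂ) :
    (Function.mulSupport fun k : ℤ => F (s - (k : ℂ)) ^ coeffZ f k).Finite := by
  apply Set.Finite.subset f.coeff.support.finite_toSet
  intro k hk
  simp only [Function.mem_mulSupport] at hk
  by_contra h
  simp only [Finset.coe_sort_coe, Finset.mem_coe, Finsupp.mem_support_iff, not_not] at h
  exact hk (by simp [coeffZ, h])

lemma coeff_Tmul (f : ℤ[T;T⁻¹]) (k : ℤ) : coeffZ (T (-1) * f) k = coeffZ f (k + 1) := by
  simp only [coeffZ, T]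
  rw [AddMonoidAlgebra.coeff_single_mul_apply]
  rw [one_mul, neg_neg, add_comm]

lemma Tw_Tmul (f : ℤ[T;T⁻¹]) (F : ℂ → ℂˣ) (s : ℂ) :
    Tw (T (-1) * f) F s = Tw f F (s + 1) := by
  unfold Tw
  simp only [coeff_Tmul]
  rw [← finprod_comp_equiv (Equiv.subRight (1 : ℤ))]
  apply finprod_congr
  intro k
  simp only [Equiv.subRight_apply, sub_add_cancel]
  push_cast
  ring_nf

lemma Tw_sub (f1 f2 : ℤ[T;T⁻¹]) (F : ℂ → ℂˣ) (s : ℂ) :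
    Tw (f1 - f2) F s = Tw f1 F s * (Tw f2 F s)⁻¹ := by
  unfold Tw
  rw [← finprod_inv_distrib, ← finprod_mul_distrib (Tw_support f1 F s)]
  · apply finprod_congr
    intro k
    have : coeffZ (f1 - f2) k = coeffZ f1 k - coeffZ f2 k := by
      unfold coeffZ; rw [AddMonoidAlgebra.coeff_sub]; exact Finsupp.sub_apply _ _ _
    rw [this, zpow_sub]
  · refine Function.HasFiniteMulSupport.inv ?_
    exact Tw_support f2 F s

lemma Tw_ratio (f : ℤ[T;T⁻¹]) (F G : ℂ → ℂˣ) (hG : ∀ t, F t = G t * F (t + 1)) (s : ℂ) :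
    Tw f F s = Tw f G s * Tw f F (s + 1) := by
  unfold Tw
  rw [← finprod_mul_distrib (Tw_support f G s) (Tw_support f F (s + 1))]
  apply finprod_congr
  intro k
  rw [← mul_zpow, show s + 1 - (k : ℂ) = (s - k) + 1 by ring, ← hG]

lemma Tw_step (f : ℤ[T;T⁻¹]) (F G : ℂ → ℂˣ) (hG : ∀ t, F t = G t * F (t + 1)) (s : ℂ) :
    Tw ((1 - T (-1)) * f) F s = Tw f G s := by
  rw [sub_mul, one_mul, Tw_sub, Tw_Tmul, Tw_ratio f F G hG s]
  group

lemma prod_zpow (x : ℂˣ) (S : Finset ℤ) (a : ℤ → ℤ) :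
    ∏ k ∈ S, x ^ a k = x ^ (∑ k ∈ S, a k) := by
  induction S using Finset.induction_on with
  | empty => simp
  | insert _ _ h ih => rw [Finset.prod_insert h, Finset.sum_insert h, zpow_add, ih]

lemma Tw_neg_one (f : ℤ[T;T⁻¹]) (s : ℂ) :
    Tw f (fun _ => (-1 : ℂˣ)) s = (-1 : ℂˣ) ^ evalOne f := by
  unfold Tw evalOne
  rw [finprod_eq_prod_of_mulSupport_subset _ (s := f.coeff.support)
      (by intro k hk; simp only [Function.mem_mulSupport] at hk
          by_contra h
          simp only [Finset.coe_sort_coe, Finset.mem_coe, Finsupp.mem_support_iff, not_not] at h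
          exact hk (by simp [coeffZ, h])),
    finsum_eq_finset_sum_of_support_subset _ (s := f.coeff.support)
      (by intro k hk; simp only [Function.mem_support] at hk
          by_contra h
          simp only [Finset.coe_sort_coe, Finset.mem_coe, Finsupp.mem_support_iff, not_not] at h
          exact hk (by simp [coeffZ, h]))]
  exact prod_zpow _ _ _

lemma key (F : ℕ → ℂ → ℂˣ) (hF1 : ∀ s : ℂ, F 1 (s + 1) = -F 1 s) :
    ∀ r : ℕ, 1 ≤ r →
      (∀ j : ℕ, 2 ≤ j → j ≤ r → ∀ s : ℂ, F j s = F (j - 1) s * F j (s + 1)) →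
      ∀ g : ℤ[T;T⁻¹], ∀ s : ℂ,
        Tw ((1 - T (-1)) ^ r * g) (F r) s = (-1 : ℂˣ) ^ evalOne g := by
  intro r hr
  induction r, hr using Nat.le_induction with
  | base =>
    intro _ g s
    rw [pow_one, Tw_step g (F 1) (fun _ => (-1 : ℂˣ))
        (fun t => by rw [hF1 t]; simp), Tw_neg_one]
  | succ r hr ih =>
    intro hlad g s
    have h1 : (1 - T (-1) : ℤ[T;T⁻¹]) ^ (r + 1) * g
        = (1 - T (-1)) * ((1 - T (-1)) ^ r * g) := by
      rw [pow_succ', mul_assoc]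
    have hG : ∀ t : ℂ, F (r + 1) t = F r t * F (r + 1) (t + 1) := by
      intro t
      have := hlad (r + 1) (by omega) le_rfl t
      simpa using this
    rw [h1, Tw_step _ (F (r + 1)) (F r) hG]
    exact ih (fun j h2 hj => hlad j h2 (by omega)) g s

/-- Let `r ≥ 1` and let `F₁, …, F_r : ℂ → ℂˣ` satisfy `F_j(s) = F_{j−1}(s)·F_j(s+1)` for all
`s ∈ ℂ` and `2 ≤ j ≤ r`, and `F₁(s+1) = −F₁(s)` for all `s ∈ ℂ`. Let `g ∈ ℤ[x,x⁻¹]` and set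
`f(x) = (1 − x⁻¹)^r · g(x)`. Then for all `s ∈ ℂ`, `(T_f F_r)(s) = (−1)^{g(1)}`, where
`g(1) ∈ ℤ` is the sum of the coefficients of `g`. In particular `(T_f F_r)(s) ∈ {1, −1}`
is constant. -/
theorem stmt5 (r : ℕ) (hr : 1 ≤ r) (F : ℕ → ℂ → ℂˣ)
    (hlad : ∀ j : ℕ, 2 ≤ j → j ≤ r → ∀ s : ℂ, F j s = F (j - 1) s * F j (s + 1))
    (hF1 : ∀ s : ℂ, F 1 (s + 1) = -F 1 s)
    (g : ℤ[T;T⁻¹]) (f : ℤ[T;T⁻¹]) (hf : f = (1 - T (-1)) ^ r * g) (s : ℂ) :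
    Tw f (F r) s = (-1 : ℂˣ) ^ evalOne g := by
  rw [hf]
  exact key F hF1 r hr hlad g s
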